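/- Let r ≥ 1 and let m_1, …, m_r and n_1, …, n_r be positive integers. If gcd(m_i, n_j) = 1 for all indices with 1 ≤ i ≤ j ≤ r, then the group G_{m_1,n_1,…,m_r,n_r} presented by ⟨x_1, …, x_r : x_1^{m_1} = 1, x_1^{n_1} = x_2^{m_2}, …, x_{r-1}^{n_{r-1}} = x_r^{m_r}, x_r^{n_r} = 1⟩ is the trivial group. -/

import Mathlib

/-- The relators of the group `G_{m_1,n_1,…,m_r,n_r} = ⟨x_1, …, x_r :
x_1^{m_1} = 1, x_i^{n_i} = x_{i+1}^{m_{i+1}} (i = 1, …, r−1), x_r^{n_r} = 1⟩`,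
as elements of the free group on `r = r' + 1` generators. -/
def fullRels (r' : ℕ) (m n : Fin (r' + 1) → ℕ) :
    Set (FreeGroup (Fin (r' + 1))) :=
  {FreeGroup.of (0 : Fin (r' + 1)) ^ m 0} ∪
    Set.range (fun i : Fin r' =>
      FreeGroup.of i.castSucc ^ n i.castSucc * (FreeGroup.of i.succ ^ m i.succ)⁻¹) ∪
    {FreeGroup.of (Fin.last r') ^ n (Fin.last r')}

lemma aux_eq_one_of_coprime_pows {G : Type*} [Group G] {g : G} {a b : ℕ}
    (ha : g ^ a = 1) (hb : g ^ b = 1) (h : Nat.gcd a b = 1) : g = 1 := by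
  have h1 := orderOf_dvd_of_pow_eq_one ha
  have h2 := orderOf_dvd_of_pow_eq_one hb
  have := Nat.dvd_gcd h1 h2
  rw [h] at this
  exact orderOf_eq_one_iff.mp (Nat.dvd_one.mp this)

/-- If `gcd(m_i, n_j) = 1` for all `1 ≤ i ≤ j ≤ r`, then the group
`G_{m_1,n_1,…,m_r,n_r}` is trivial. -/
theorem full_presented_group_trivial (r' : ℕ)
    (m n : Fin (r' + 1) → ℕ)
    (hm : ∀ i, 0 < m i) (hn : ∀ j, 0 < n j)
    (hgcd : ∀ i j : Fin (r' + 1), i ≤ j → Nat.gcd (m i) (n j) = 1) :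
    ∀ x : PresentedGroup (fullRels r' m n), x = 1 := by
  set R := fullRels r' m n with hR
  let g : Fin (r' + 1) → PresentedGroup R := fun i => PresentedGroup.of i
  have hone : ∀ w ∈ R, (QuotientGroup.mk w : PresentedGroup R) = 1 := fun w hw =>
    (QuotientGroup.eq_one_iff w).mpr (Subgroup.subset_normalClosure hw)
  have hgi : ∀ (i : Fin (r'+1)) (k : ℕ),
      (QuotientGroup.mk (FreeGroup.of i ^ k) : PresentedGroup R) = g i ^ k := by
    intro i k
    rfl
  have h0 : g 0 ^ m 0 = 1 := by
    rw [← hgi]; exact hone _ (Or.inl (Or.inl rfl))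
  have hmid : ∀ i : Fin r', g i.castSucc ^ n i.castSucc = g i.succ ^ m i.succ := by
    intro i
    have := hone _ (Or.inl (Or.inr ⟨i, rfl⟩))
    rw [QuotientGroup.mk_mul, QuotientGroup.mk_inv, hgi, hgi] at this
    exact mul_inv_eq_one.mp this
  have hlast : g (Fin.last r') ^ n (Fin.last r') = 1 := by
    rw [← hgi]; exact hone _ (Or.inr rfl)
  -- forward induction: each g i is killed by an exponent coprime to all later n's
  have fwd : ∀ i : Fin (r'+1), ∃ k : ℕ, g i ^ k = 1 ∧
      ∀ j, i ≤ j → Nat.gcd k (n j) = 1 := by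
    intro i
    induction i using Fin.induction with
    | zero => exact ⟨m 0, h0, fun j _ => hgcd 0 j (Fin.zero_le j)⟩
    | succ i ih =>
      obtain ⟨k, hk1, hk2⟩ := ih
      refine ⟨m i.succ * k, ?_, ?_⟩
      · rw [pow_mul, ← hmid i, ← pow_mul, mul_comm, pow_mul, hk1, one_pow]
      · intro j hj
        exact Nat.Coprime.mul (hgcd i.succ j hj)
          (hk2 j (le_trans (le_of_lt (Fin.castSucc_lt_succ (i := i))) hj))
  -- backward induction: all generators are trivial
  have bwd : ∀ i : Fin (r'+1), g i = 1 := by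
    intro i
    induction i using Fin.reverseInduction with
    | last =>
      obtain ⟨k, hk1, hk2⟩ := fwd (Fin.last r')
      exact aux_eq_one_of_coprime_pows hk1 hlast (hk2 _ le_rfl)
    | cast i ih =>
      obtain ⟨k, hk1, hk2⟩ := fwd i.castSucc
      have : g i.castSucc ^ n i.castSucc = 1 := by rw [hmid i, ih, one_pow]
      exact aux_eq_one_of_coprime_pows hk1 this (hk2 _ le_rfl)
  intro x
  obtain ⟨w, rfl⟩ := QuotientGroup.mk_surjective x
  induction w using FreeGroup.induction_on with
  | C1 => rfl
  | of i => exact bwd i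
  | inv_of i h => rw [QuotientGroup.mk_inv, h]; exact inv_one
  | mul a b ha hb => rw [QuotientGroup.mk_mul, ha, hb]; exact one_mul 1
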